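/- Let n ≥ 1 and let 0 < ε_{1,2} < ε_{0,1} < ε_{0,2} be reals. Let A ⊆ ℝⁿ be a set such that for all x, y ∈ A, either ‖x−y‖ ≤ ε_{1,2} or ε_{0,1} ≤ ‖x−y‖ ≤ ε_{0,2}. Then A can be covered by at most (3·ε_{0,2}/ε_{0,1})^n closed balls of radius ε_{1,2}. -/

import Mathlib

open Metric MeasureTheory Set Module
open scoped ENNReal

lemma packing_bound (n : ℕ) (hn : 1 ≤ n) (r R : ℝ) (hr : 0 < r) (hR : 0 < R)
    (S : Finset (EuclideanSpace ℝ (Fin n)))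
    (hsep : ∀ x ∈ S, ∀ y ∈ S, x ≠ y → r ≤ dist x y)
    (hbdd : ∀ x ∈ S, ∀ y ∈ S, dist x y ≤ R) :
    (S.card : ℝ) * (r / 2) ^ n ≤ (R + r / 2) ^ n := by
  rcases S.eq_empty_or_nonempty with rfl | ⟨x₀, hx₀⟩
  · simp [pow_nonneg (by linarith : (0:ℝ) ≤ R + r/2)]
  haveI : Nonempty (Fin n) := ⟨⟨0, hn⟩⟩
  haveI : Nontrivial (EuclideanSpace ℝ (Fin n)) := by
    infer_instance
  set μ : Measure (EuclideanSpace ℝ (Fin n)) := volume with hμ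
  have hfin : finrank ℝ (EuclideanSpace ℝ (Fin n)) = n := finrank_euclideanSpace_fin
  have hdisj : (S : Set (EuclideanSpace ℝ (Fin n))).PairwiseDisjoint
      (fun x => ball x (r / 2)) := by
    intro x hx y hy hxy
    apply ball_disjoint_ball
    have := hsep x hx y hy hxy
    linarith
  have hsub : (⋃ x ∈ S, ball x (r / 2)) ⊆ closedBall x₀ (R + r / 2) := by
    intro z hz
    simp only [mem_iUnion, Finset.mem_coe] at hz
    obtain ⟨x, hx, hxz⟩ := hz
    rw [mem_ball] at hxz
    rw [mem_closedBall]
    calc dist z x₀ ≤ dist z x + dist x x₀ := dist_triangle _ _ _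
      _ ≤ r / 2 + R := by have := hbdd x hx x₀ hx₀; linarith
      _ = R + r / 2 := by ring
  have hμeq : μ (⋃ x ∈ S, ball x (r / 2)) = ∑ x ∈ S, μ (ball x (r / 2)) :=
    measure_biUnion_finset hdisj (fun x _ => measurableSet_ball)
  have hball : ∀ x : EuclideanSpace ℝ (Fin n),
      μ (ball x (r / 2)) = ENNReal.ofReal ((r / 2) ^ n) * μ (ball 0 1) := by
    intro x
    rw [Measure.addHaar_ball μ x (by linarith : (0:ℝ) ≤ r / 2), hfin]
  have hcb : μ (closedBall x₀ (R + r / 2))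
      = ENNReal.ofReal ((R + r / 2) ^ n) * μ (ball 0 1) := by
    rw [Measure.addHaar_closedBall μ x₀ (by linarith : (0:ℝ) ≤ R + r / 2), hfin]
  have key : ((S.card : ℝ≥0∞) * ENNReal.ofReal ((r / 2) ^ n)) * μ (ball 0 1)
      ≤ ENNReal.ofReal ((R + r / 2) ^ n) * μ (ball 0 1) := by
    calc ((S.card : ℝ≥0∞) * ENNReal.ofReal ((r / 2) ^ n)) * μ (ball 0 1)
        = ∑ x ∈ S, μ (ball x (r / 2)) := by
          rw [Finset.sum_congr rfl (fun x _ => hball x), Finset.sum_const, nsmul_eq_mul,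
            mul_assoc]
      _ = μ (⋃ x ∈ S, ball x (r / 2)) := hμeq.symm
      _ ≤ μ (closedBall x₀ (R + r / 2)) := measure_mono hsub
      _ = _ := hcb
  have hμb0 : μ (ball (0 : EuclideanSpace ℝ (Fin n)) 1) ≠ 0 :=
    (measure_ball_pos μ 0 one_pos).ne'
  have hμbt : μ (ball (0 : EuclideanSpace ℝ (Fin n)) 1) ≠ ⊤ :=
    measure_ball_lt_top.ne
  have key2 : (S.card : ℝ≥0∞) * ENNReal.ofReal ((r / 2) ^ n)
      ≤ ENNReal.ofReal ((R + r / 2) ^ n) :=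
    (ENNReal.mul_le_mul_iff_left hμb0 hμbt).mp key
  have h1 : ((S.card : ℝ≥0∞) * ENNReal.ofReal ((r / 2) ^ n))
      = ENNReal.ofReal ((S.card : ℝ) * (r / 2) ^ n) := by
    rw [ENNReal.ofReal_mul (by positivity), ENNReal.ofReal_natCast]
  rw [h1] at key2
  exact (ENNReal.ofReal_le_ofReal_iff (by positivity)).mp key2

/-- base case of the covering lemma. -/
theorem stmt_2 (n : ℕ) (hn : 1 ≤ n) (ε₁₂ ε₀₁ ε₀₂ : ℝ)
    (h1 : 0 < ε₁₂) (h2 : ε₁₂ < ε₀₁) (h3 : ε₀₁ < ε₀₂)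
    (A : Set (EuclideanSpace ℝ (Fin n)))
    (hA : ∀ x ∈ A, ∀ y ∈ A,
      ‖x - y‖ ≤ ε₁₂ ∨ (ε₀₁ ≤ ‖x - y‖ ∧ ‖x - y‖ ≤ ε₀₂)) :
    ∃ F : Finset (EuclideanSpace ℝ (Fin n)),
      (F.card : ℝ) ≤ (3 * ε₀₂ / ε₀₁) ^ n ∧
      A ⊆ ⋃ c ∈ F, Metric.closedBall c ε₁₂ := by
  classical
  set P : Finset (EuclideanSpace ℝ (Fin n)) → Prop :=
    fun S => ↑S ⊆ A ∧ ∀ x ∈ S, ∀ y ∈ S, x ≠ y → ε₁₂ < dist x y with hP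
  have hbound : ∀ S, P S → (S.card : ℝ) ≤ (3 * ε₀₂ / ε₀₁) ^ n := by
    rintro S ⟨hSA, hSsep⟩
    have hsep : ∀ x ∈ S, ∀ y ∈ S, x ≠ y → ε₀₁ ≤ dist x y := by
      intro x hx y hy hxy
      rcases hA x (hSA hx) y (hSA hy) with h | h
      · exfalso
        have := hSsep x hx y hy hxy
        rw [dist_eq_norm] at this; linarith
      · rw [dist_eq_norm]; exact h.1
    have hbdd : ∀ x ∈ S, ∀ y ∈ S, dist x y ≤ ε₀₂ := by
      intro x hx y hy
      rcases hA x (hSA hx) y (hSA hy) with h | h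
      · rw [dist_eq_norm]; linarith
      · rw [dist_eq_norm]; exact h.2
    have hpack := packing_bound n hn ε₀₁ ε₀₂ (by linarith) (by linarith) S hsep hbdd
    have h2' : (ε₀₂ + ε₀₁ / 2) ^ n ≤ (3 * ε₀₂ / ε₀₁) ^ n * (ε₀₁ / 2) ^ n := by
      rw [← mul_pow]
      apply pow_le_pow_left₀ (by linarith)
      have h0 : ε₀₁ ≠ 0 := by linarith
      have heq : 3 * ε₀₂ / ε₀₁ * (ε₀₁ / 2) = 3 * ε₀₂ / 2 := by
        field_simp
      rw [heq]; linarith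
    have h01 : (0:ℝ) < ε₀₁ := lt_trans h1 h2
    have hp : (0:ℝ) < (ε₀₁ / 2) ^ n := by positivity
    exact le_of_mul_le_mul_right (hpack.trans h2') hp
  set N := ⌊(3 * ε₀₂ / ε₀₁) ^ n⌋₊ with hN
  have hboundN : ∀ S, P S → S.card ≤ N := fun S hS => Nat.le_floor (hbound S hS)
  set Q : ℕ → Prop := fun k => ∃ S, P S ∧ S.card = k with hQ
  have hQ0 : Q 0 := ⟨∅, ⟨by simp, by simp⟩, rfl⟩
  obtain ⟨S, hPS, hcard⟩ :=
    Nat.findGreatest_spec (P := Q) (Nat.zero_le N) hQ0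
  refine ⟨S, hbound S hPS, ?_⟩
  intro a ha
  by_contra hcon
  simp only [Set.mem_iUnion, Metric.mem_closedBall, not_exists, not_and, not_le] at hcon
  have haS : a ∉ S := by
    intro h'
    have := hcon a h'
    simp at this
    linarith
  have hP' : P (insert a S) := by
    constructor
    · intro x hx
      rw [Finset.coe_insert, Set.mem_insert_iff] at hx
      rcases hx with rfl | hx
      · exact ha
      · exact hPS.1 hx
    · intro x hx y hy hxy
      rw [Finset.mem_insert] at hx hy
      rcases hx with rfl | hx <;> rcases hy with rfl | hy
      · exact absurd rfl hxy
      · simpa [dist_comm] using hcon y hy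
      · simpa [dist_comm] using hcon x hx
      · exact hPS.2 x hx y hy hxy
  have hc1 : (insert a S).card = S.card + 1 := Finset.card_insert_of_notMem haS
  have hle : S.card + 1 ≤ Nat.findGreatest Q N := by
    apply Nat.le_findGreatest
    · have := hboundN _ hP'
      omega
    · exact ⟨insert a S, hP', hc1⟩
  omega
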